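/- Let π ⊆ Iso(ℝⁿ) be a crystallographic group with lattice L_π and holonomy H_π, and let W ⊆ ℝⁿ be an H_π-invariant, L_π-generated subspace. Then the map sending (A, v) ∈ π to (A|_{W⊥}, P_{W⊥}(v)) ∈ Iso(W⊥) is a group homomorphism, and its image is a discrete subgroup of Iso(W⊥) whose action on W⊥ is cocompact. -/

import Mathlib

/-- The restriction-projection homomorphism: for a pair p = (A, v) in
Iso(ℝⁿ) = O(n) ⋉ ℝⁿ and a subspace W, this is the continuous linear map
P_{W⊥} ∘ A ∘ incl : W⊥ → W⊥, which equals the restriction A|_{W⊥} when A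
preserves W⊥. -/
noncomputable def restrPerp {n : ℕ} (W : Submodule ℝ (EuclideanSpace ℝ (Fin n)))
    (p : (EuclideanSpace ℝ (Fin n) ≃ₗᵢ[ℝ] EuclideanSpace ℝ (Fin n)) ×
      EuclideanSpace ℝ (Fin n)) : Wᗮ →L[ℝ] Wᗮ :=
  (Submodule.orthogonalProjectionOnto Wᗮ).comp
    ((p.1.toLinearIsometry.toContinuousLinearMap).comp Wᗮ.subtypeL)

lemma finite_isolated {X : Type*} [MetricSpace X] {F : Set X} (hF : F.Finite) (x : X) :
    ∃ ε > 0, ∀ y ∈ F, dist y x < ε → y = x := by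
  have hcl : IsClosed (F \ {x}) := (hF.subset Set.diff_subset).isClosed
  have hx : x ∈ (F \ {x})ᶜ := by simp
  obtain ⟨ε, hε, hball⟩ := Metric.isOpen_iff.1 hcl.isOpen_compl x hx
  refine ⟨ε, hε, fun y hy hd => ?_⟩
  by_contra hne
  exact hball (Metric.mem_ball.2 hd) ⟨hy, hne⟩

lemma discrete_of_isolated {X : Type*} [MetricSpace X] {S : Set X}
    (h : ∀ x ∈ S, ∃ ε > 0, ∀ y ∈ S, dist y x < ε → y = x) : DiscreteTopology S := by
  rw [discreteTopology_subtype_iff]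
  intro x hx
  obtain ⟨ε, hε, hb⟩ := h x hx
  rw [Filter.inf_principal_eq_bot]
  refine mem_nhdsWithin.2 ⟨Metric.ball x ε, Metric.isOpen_ball, Metric.mem_ball_self hε, ?_⟩
  rintro y ⟨hy1, hy2⟩ hyS
  exact hy2 (hb y hyS (Metric.mem_ball.1 hy1))

set_option maxHeartbeats 2000000 in
/-- Let π ⊆ Iso(ℝⁿ) be a crystallographic group (realized as a set of pairs (A,v)
acting by x ↦ Ax + v: a group, with discrete image in (ℝⁿ →L ℝⁿ) × ℝⁿ, cocompact
action, finite holonomy H_π, and translation lattice L_π = {v : (Id,v) ∈ π} a full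
lattice), and let W be an H_π-invariant, L_π-generated subspace. Then
(A, v) ↦ (A|_{W⊥}, P_{W⊥}(v)) is a group homomorphism into Iso(W⊥), its image is
discrete, and its action on W⊥ is cocompact. -/
theorem stmt_19 {n : ℕ}
    (π : Set ((EuclideanSpace ℝ (Fin n) ≃ₗᵢ[ℝ] EuclideanSpace ℝ (Fin n)) ×
      EuclideanSpace ℝ (Fin n)))
    (hone : (1, 0) ∈ π)
    (hmul : ∀ p ∈ π, ∀ q ∈ π, (p.1 * q.1, p.1 q.2 + p.2) ∈ π)
    (hinv : ∀ p ∈ π, (p.1⁻¹, -(p.1⁻¹ p.2)) ∈ π)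
    (hdisc : DiscreteTopology
      {y : (EuclideanSpace ℝ (Fin n) →L[ℝ] EuclideanSpace ℝ (Fin n)) ×
          EuclideanSpace ℝ (Fin n) |
        ∃ p ∈ π, y = (p.1.toLinearIsometry.toContinuousLinearMap, p.2)})
    (hcocompact : ∃ C : Set (EuclideanSpace ℝ (Fin n)), IsCompact C ∧
      ∀ x : EuclideanSpace ℝ (Fin n), ∃ p ∈ π, p.1 x + p.2 ∈ C)
    (hHfin : Set.Finite
      {A : EuclideanSpace ℝ (Fin n) ≃ₗᵢ[ℝ] EuclideanSpace ℝ (Fin n) | ∃ v, (A, v) ∈ π})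
    (hLlat : ∃ b : Module.Basis (Fin n) ℝ (EuclideanSpace ℝ (Fin n)),
      ((AddSubgroup.closure (Set.range ⇑b) : AddSubgroup (EuclideanSpace ℝ (Fin n))) :
        Set (EuclideanSpace ℝ (Fin n))) = {v | (1, v) ∈ π})
    (W : Submodule ℝ (EuclideanSpace ℝ (Fin n)))
    (hWinv : ∀ p ∈ π, ⇑p.1 '' (W : Set (EuclideanSpace ℝ (Fin n))) = W)
    (hWgen : Submodule.span ℝ
      ((W : Set (EuclideanSpace ℝ (Fin n))) ∩ {v | (1, v) ∈ π}) = W) :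
    -- (A,v) ↦ (A|_{W⊥}, P_{W⊥}(v)) is a group homomorphism:
    (∀ p ∈ π, ∀ q ∈ π,
      restrPerp W (p.1 * q.1, p.1 q.2 + p.2) = (restrPerp W p).comp (restrPerp W q) ∧
      Submodule.orthogonalProjectionOnto Wᗮ (p.1 q.2 + p.2) =
        restrPerp W p (Submodule.orthogonalProjectionOnto Wᗮ q.2) + Submodule.orthogonalProjectionOnto Wᗮ p.2) ∧
    -- its image is a discrete subgroup of Iso(W⊥):
    DiscreteTopology
      {y : (Wᗮ →L[ℝ] Wᗮ) × Wᗮ |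
        ∃ p ∈ π, y = (restrPerp W p, Submodule.orthogonalProjectionOnto Wᗮ p.2)} ∧
    -- and its action on W⊥ is cocompact:
    (∃ C : Set Wᗮ, IsCompact C ∧
      ∀ x : Wᗮ, ∃ p ∈ π, restrPerp W p x + Submodule.orthogonalProjectionOnto Wᗮ p.2 ∈ C) := by
  set E := EuclideanSpace ℝ (Fin n)
  have keyP : ∀ p ∈ π, ∀ z : E,
      Submodule.orthogonalProjectionOnto Wᗮ (p.1 z) =
        Submodule.orthogonalProjectionOnto Wᗮ (p.1 ((Submodule.orthogonalProjectionOnto Wᗮ z : Wᗮ) : E)) := by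
    intro p hp z
    set Pz : E := ((Submodule.orthogonalProjectionOnto Wᗮ z : Wᗮ) : E) with hPz
    have h1 : z - Pz ∈ Wᗮᗮ := Submodule.sub_starProjection_mem_orthogonal z
    have h2 : z - Pz ∈ W := by rwa [Submodule.orthogonal_orthogonal] at h1
    have h3 : p.1 (z - Pz) ∈ (W : Set E) := by
      rw [← hWinv p hp]; exact Set.mem_image_of_mem _ h2
    have h4 : p.1 (z - Pz) ∈ Wᗮᗮ := Submodule.le_orthogonal_orthogonal W h3
    have h5 : p.1 z = p.1 (z - Pz) + p.1 Pz := by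
      rw [← map_add, sub_add_cancel]
    rw [h5, map_add, Submodule.orthogonalProjectionOnto_apply_of_mem_orthogonal h4, zero_add]
  have hrp : ∀ (p : (E ≃ₗᵢ[ℝ] E) × E) (x : Wᗮ),
      restrPerp W p x = Submodule.orthogonalProjectionOnto Wᗮ (p.1 (x : E)) := by
    intro p x; rfl
  refine ⟨?_, ?_, ?_⟩
  · -- homomorphism
    intro p hp q hq
    constructor
    · apply ContinuousLinearMap.ext
      intro x
      simp only [ContinuousLinearMap.comp_apply, hrp]
      have : (p.1 * q.1) (x : E) = p.1 (q.1 (x : E)) := by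
        rw [LinearIsometryEquiv.coe_mul]; rfl
      rw [this]
      exact keyP p hp (q.1 (x : E))
    · rw [map_add, hrp]
      congr 1
      exact keyP p hp q.2
  · -- discreteness
    obtain ⟨b, hb⟩ := hLlat
    set Lset : Set E := {v : E | (1, v) ∈ π} with hLsetdef
    have hLsub : ((Submodule.span ℤ (Set.range ⇑b) : Submodule ℤ E) : Set E) = Lset := by
      rw [← hb, ← Submodule.span_int_eq_addSubgroupClosure]
      rfl
    haveI hdt : DiscreteTopology
        ((Submodule.span ℤ (Set.range ⇑b) : Submodule ℤ E) : Set E) :=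
      inferInstanceAs (DiscreteTopology (Submodule.span ℤ (Set.range ⇑b)))
    have hLclosed : IsClosed ((Submodule.span ℤ (Set.range ⇑b) : Submodule ℤ E) : Set E) := by
      have : IsClosed ((Submodule.span ℤ (Set.range ⇑b)).toAddSubgroup : Set E) :=
        AddSubgroup.isClosed_of_discrete
      exact this
    have hLball : ∀ r : ℝ, Set.Finite {v : E | v ∈ Lset ∧ ‖v‖ ≤ r} := by
      intro r
      have h := Metric.finite_isBounded_inter_isClosed
        (K := Metric.closedBall (0 : E) r)
        (s := ((Submodule.span ℤ (Set.range ⇑b) : Submodule ℤ E) : Set E))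
        ⟨hdt⟩ Metric.isBounded_closedBall hLclosed
      apply h.subset
      rintro v ⟨hv1, hv2⟩
      exact ⟨by rwa [Metric.mem_closedBall, dist_zero_right], by rwa [hLsub]⟩
    -- a finite spanning set of W inside the lattice, and approximation in W
    obtain ⟨s0, hs0sub, hs0span, hs0li⟩ :=
      exists_linearIndependent ℝ ((W : Set E) ∩ Lset)
    have hs0fin : s0.Finite := hs0li.setFinite
    set t : Finset E := hs0fin.toFinset with ht
    have htsub : (t : Set E) ⊆ (W : Set E) ∩ Lset := by
      rw [ht, Set.Finite.coe_toFinset]; exact hs0sub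
    have htspan : Submodule.span ℝ (t : Set E) = W := by
      rw [ht, Set.Finite.coe_toFinset, hs0span, hWgen]
    set R₀ : ℝ := ∑ u ∈ t, ‖u‖ with hR₀
    have hWnear : ∀ w : E, w ∈ W → ∃ u, u ∈ Lset ∧ u ∈ W ∧ ‖w - u‖ ≤ R₀ := by
      intro w hw
      have hw' : w ∈ Submodule.span ℝ (t : Set E) := by rw [htspan]; exact hw
      obtain ⟨f, -, hf⟩ := Submodule.mem_span_finset.1 hw'
      refine ⟨∑ i ∈ t, (⌊f i⌋ : ℝ) • i, ?_, ?_, ?_⟩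
      · show ∑ i ∈ t, (⌊f i⌋ : ℝ) • i ∈ Lset
        rw [← hLsub]
        refine Submodule.sum_mem _ fun i hi => ?_
        have hiL : i ∈ Submodule.span ℤ (Set.range ⇑b) := by
          have : i ∈ Lset := (htsub hi).2
          rwa [← hLsub] at this
        rw [Int.cast_smul_eq_zsmul]
        exact Submodule.smul_mem _ _ hiL
      · exact Submodule.sum_mem _ fun i hi => Submodule.smul_mem _ _ (htsub hi).1
      · have heq : w - ∑ i ∈ t, (⌊f i⌋ : ℝ) • i = ∑ i ∈ t, (f i - (⌊f i⌋ : ℝ)) • i := by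
          rw [← hf, ← Finset.sum_sub_distrib]
          congr 1; ext i; rw [sub_smul]
        rw [heq, hR₀]
        refine (norm_sum_le _ _).trans (Finset.sum_le_sum fun i hi => ?_)
        rw [norm_smul, Real.norm_eq_abs]
        have h1 : 0 ≤ f i - (⌊f i⌋ : ℝ) := sub_nonneg.2 (Int.floor_le _)
        have h2 : f i - (⌊f i⌋ : ℝ) ≤ 1 := by
          have := Int.lt_floor_add_one (f i); linarith
        calc |f i - (⌊f i⌋ : ℝ)| * ‖i‖ ≤ 1 * ‖i‖ := by
              apply mul_le_mul_of_nonneg_right _ (norm_nonneg _)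
              rw [abs_of_nonneg h1]; exact h2
          _ = ‖i‖ := one_mul _
    -- finiteness of projected lattice points in balls
    have hLsetsub : ∀ a ∈ Lset, ∀ a' ∈ Lset, a - a' ∈ Lset := by
      intro a ha a' ha'
      rw [← hLsub] at ha ha' ⊢
      exact Submodule.sub_mem _ ha ha'
    have hPW : ∀ u : E, u ∈ W → Submodule.orthogonalProjectionOnto Wᗮ u = 0 := fun u hu =>
      Submodule.orthogonalProjectionOnto_apply_of_mem_orthogonal
        (Submodule.le_orthogonal_orthogonal W hu)
    have hΛball : ∀ (c : Wᗮ) (r : ℝ), Set.Finite {x : Wᗮ |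
        (∃ v ∈ Lset, Submodule.orthogonalProjectionOnto Wᗮ v = x) ∧ dist x c ≤ r} := by
      intro c r
      apply ((hLball (R₀ + (‖c‖ + r))).image
        (fun v : E => (Submodule.orthogonalProjectionOnto Wᗮ v : Wᗮ))).subset
      rintro x ⟨⟨v, hvL, hvP⟩, hxc⟩
      have hw : v - ((Submodule.orthogonalProjectionOnto Wᗮ v : Wᗮ) : E) ∈ W := by
        have h1 := Submodule.sub_starProjection_mem_orthogonal (K := Wᗮ) v
        rwa [Submodule.orthogonal_orthogonal] at h1
      obtain ⟨u, huL, huW, hunear⟩ := hWnear _ hw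
      refine ⟨v - u, ⟨hLsetsub v hvL u huL, ?_⟩, ?_⟩
      · have hx : ‖x‖ ≤ ‖c‖ + r := by
          calc ‖x‖ = ‖x - c + c‖ := by rw [sub_add_cancel]
            _ ≤ ‖x - c‖ + ‖c‖ := norm_add_le _ _
            _ ≤ r + ‖c‖ := by
                rw [← dist_eq_norm]; exact add_le_add_left hxc _
            _ = ‖c‖ + r := by ring
        have heq2 : v - u = (v - ((Submodule.orthogonalProjectionOnto Wᗮ v : Wᗮ) : E) - u) +
            ((Submodule.orthogonalProjectionOnto Wᗮ v : Wᗮ) : E) := by abel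
        rw [heq2]
        calc ‖_ + _‖ ≤ ‖v - ((Submodule.orthogonalProjectionOnto Wᗮ v : Wᗮ) : E) - u‖ +
              ‖((Submodule.orthogonalProjectionOnto Wᗮ v : Wᗮ) : E)‖ := norm_add_le _ _
          _ ≤ R₀ + (‖c‖ + r) := by
              apply add_le_add hunear
              rw [Submodule.norm_coe, hvP]
              exact hx
      · show Submodule.orthogonalProjectionOnto Wᗮ (v - u) = x
        rw [map_sub, hPW u huW, sub_zero, hvP]
    -- second components of elements of π with equal rotation parts differ by lattice
    have hdiff : ∀ p ∈ π, ∀ q ∈ π, p.1 = q.1 → (1, p.2 - q.2) ∈ π := by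
      intro p hp q hq hpq
      have h2 := hmul p hp _ (hinv q hq)
      have e1 : p.1 * q.1⁻¹ = 1 := by rw [hpq, mul_inv_cancel]
      have e2 : p.1 (-(q.1⁻¹ q.2)) + p.2 = p.2 - q.2 := by
        rw [hpq, map_neg]
        have h3 : q.1⁻¹ q.2 = q.1.symm q.2 := by rw [LinearIsometryEquiv.coe_inv]
        rw [h3, q.1.apply_symm_apply]
        abel
      have e3 : ((1 : E ≃ₗᵢ[ℝ] E), p.2 - q.2)
          = (p.1 * q.1⁻¹, p.1 (-(q.1⁻¹ q.2)) + p.2) := by rw [e1, e2]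
      rw [e3]
      exact h2
    -- finiteness of translation parts in balls
    have hTball : ∀ c : Wᗮ, Set.Finite {x : Wᗮ |
        (∃ q ∈ π, Submodule.orthogonalProjectionOnto Wᗮ q.2 = x) ∧ dist x c ≤ 1} := by
      intro c
      have hcov : {x : Wᗮ | (∃ q ∈ π, Submodule.orthogonalProjectionOnto Wᗮ q.2 = x) ∧ dist x c ≤ 1} ⊆
          ⋃ A ∈ {A : E ≃ₗᵢ[ℝ] E | ∃ v, (A, v) ∈ π},
            {x : Wᗮ | (∃ v, (A, v) ∈ π ∧ Submodule.orthogonalProjectionOnto Wᗮ v = x) ∧ dist x c ≤ 1} := by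
        rintro x ⟨⟨q, hq, hqP⟩, hxc⟩
        exact Set.mem_biUnion ⟨q.2, hq⟩ ⟨⟨q.2, hq, hqP⟩, hxc⟩
      apply (Set.Finite.biUnion hHfin ?_).subset hcov
      intro A hA
      obtain ⟨v₀, hv₀⟩ := hA
      apply ((hΛball (c - Submodule.orthogonalProjectionOnto Wᗮ v₀) 1).image
        (fun y : Wᗮ => Submodule.orthogonalProjectionOnto Wᗮ v₀ + y)).subset
      rintro x ⟨⟨v, hv, hvP⟩, hxc⟩
      refine ⟨x - Submodule.orthogonalProjectionOnto Wᗮ v₀, ⟨⟨v - v₀, ?_, ?_⟩, ?_⟩, ?_⟩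
      · exact hdiff (A, v) hv (A, v₀) hv₀ rfl
      · show Submodule.orthogonalProjectionOnto Wᗮ (v - v₀) = x - Submodule.orthogonalProjectionOnto Wᗮ v₀
        rw [map_sub, hvP]
      · rw [dist_sub_right]
        exact hxc
      · show Submodule.orthogonalProjectionOnto Wᗮ v₀ + (x - Submodule.orthogonalProjectionOnto Wᗮ v₀) = x
        abel
    -- assemble
    have hF1 : Set.Finite {f : Wᗮ →L[ℝ] Wᗮ | ∃ q ∈ π, restrPerp W q = f} := by
      apply (hHfin.image (fun A => restrPerp W (A, (0 : E)))).subset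
      rintro f ⟨q, hq, rfl⟩
      exact ⟨q.1, ⟨q.2, by rwa [Prod.mk.eta]⟩, rfl⟩
    have hiso_all : ∀ y ∈ {y : (Wᗮ →L[ℝ] Wᗮ) × Wᗮ |
        ∃ p ∈ π, y = (restrPerp W p, Submodule.orthogonalProjectionOnto Wᗮ p.2)},
        ∃ ε > 0, ∀ z ∈ {y : (Wᗮ →L[ℝ] Wᗮ) × Wᗮ |
          ∃ p ∈ π, y = (restrPerp W p, Submodule.orthogonalProjectionOnto Wᗮ p.2)},
          dist z y < ε → z = y := by
      rintro y ⟨p, hp, rfl⟩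
      have hF : Set.Finite ({f : Wᗮ →L[ℝ] Wᗮ | ∃ q ∈ π, restrPerp W q = f} ×ˢ
          {x : Wᗮ | (∃ q ∈ π, Submodule.orthogonalProjectionOnto Wᗮ q.2 = x) ∧
            dist x (Submodule.orthogonalProjectionOnto Wᗮ p.2) ≤ 1}) :=
        hF1.prod (hTball _)
      obtain ⟨ε, hε, hiso⟩ := finite_isolated hF (restrPerp W p, Submodule.orthogonalProjectionOnto Wᗮ p.2)
      refine ⟨min ε 1, lt_min hε one_pos, ?_⟩
      rintro z ⟨q, hq, rfl⟩ hd
      have hdε := lt_of_lt_of_le hd (min_le_left _ _)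
      simp only [Prod.dist_eq] at hd
      have hd2 : dist (Submodule.orthogonalProjectionOnto Wᗮ q.2 : Wᗮ)
          (Submodule.orthogonalProjectionOnto Wᗮ p.2) < 1 :=
        lt_of_le_of_lt (le_max_right _ _) (lt_of_lt_of_le hd (min_le_right _ _))
      exact hiso _ ⟨⟨q, hq, rfl⟩, ⟨q, hq, rfl⟩, le_of_lt hd2⟩ hdε
    exact discrete_of_isolated (X := (Wᗮ →L[ℝ] Wᗮ) × Wᗮ) hiso_all
  · -- cocompact
    obtain ⟨C, hC, hCc⟩ := hcocompact
    refine ⟨(fun x : E => (Submodule.orthogonalProjectionOnto Wᗮ x : Wᗮ)) '' C,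
      hC.image (Submodule.orthogonalProjectionOnto Wᗮ).continuous, ?_⟩
    intro x
    obtain ⟨p, hp, hpx⟩ := hCc (x : E)
    refine ⟨p, hp, ?_⟩
    have : restrPerp W p x + Submodule.orthogonalProjectionOnto Wᗮ p.2
        = Submodule.orthogonalProjectionOnto Wᗮ (p.1 (x : E) + p.2) := by
      rw [map_add, hrp]
    rw [this]
    exact Set.mem_image_of_mem _ hpx
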